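/- Let A be a commutative ring, let y ∈ A be a unit, and let u ∈ A⟦t⟧ be a power series with u² = t² + y whose constant coefficient is a unit (so u is a unit of A⟦t⟧). Set σ := t·u⁻¹ ∈ A⟦t⟧ (a power series with zero constant term), and for n ≥ 1 let σ^{∘n} denote the n-fold composite σ ∘ σ ∘ ⋯ ∘ σ under substitution of power series. Then for every n ≥ 1 the identity (σ^{∘n})² · ((1 + y + ⋯ + y^{n−1})·t² + yⁿ) = t² holds in A⟦t⟧. -/

import Mathlib

open PowerSeries

/-- Substitution (composition) of formal power series: `pscomp f g` is `f ∘ g`,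
i.e. the series `∑ₖ fₖ gᵏ`, whose `n`-th coefficient is the (finitely supported,
when the constant coefficient of `g` is nilpotent) sum `∑ᶠ k, fₖ · (coeff n gᵏ)`. -/
noncomputable def pscomp {A : Type*} [CommRing A] (f g : PowerSeries A) : PowerSeries A :=
  PowerSeries.mk fun n => ∑ᶠ k : ℕ, (coeff k f) * (coeff n (g ^ k))

section Aux
variable {A : Type*} [CommRing A]


lemma coeff_pow_eq_zero {g : PowerSeries A} (hg : constantCoeff g = 0)
    {k n : ℕ} (h : n < k) : coeff n (g ^ k) = 0 := by
  have hd : (X : PowerSeries A) ^ k ∣ g ^ k :=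
    pow_dvd_pow_of_dvd (X_dvd_iff.mpr hg) k
  exact X_pow_dvd_iff.mp hd n h

lemma coeff_pscomp {g : PowerSeries A} (hg : constantCoeff g = 0) (f : PowerSeries A)
    (n : ℕ) : coeff n (pscomp f g)
      = ∑ k ∈ Finset.range (n + 1), coeff k f * coeff n (g ^ k) := by
  rw [pscomp, coeff_mk]
  apply finsum_eq_sum_of_support_subset
  intro k hk
  simp only [Function.mem_support] at hk
  simp only [Finset.coe_range, Set.mem_Iio]
  by_contra h
  exact hk (by rw [coeff_pow_eq_zero hg (by omega), mul_zero])

lemma eval₂_trunc_eq_sum {g : PowerSeries A} (f : PowerSeries A) (N : ℕ) :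
    Polynomial.eval₂ C g (trunc N f)
      = ∑ k ∈ Finset.range N, C (coeff k f) * g ^ k := by
  rcases Nat.eq_zero_or_pos N with rfl | hN
  · simp [trunc_zero']
  · have hdeg : (trunc N f).natDegree < N := by
      by_cases hp : trunc N f = 0
      · simpa [hp] using hN
      · exact (Polynomial.natDegree_lt_iff_degree_lt hp).mpr (degree_trunc_lt f N)
    rw [Polynomial.eval₂_eq_sum_range' C hdeg g]
    apply Finset.sum_congr rfl
    intro k hk
    rw [coeff_trunc, if_pos (Finset.mem_range.mp hk)]

lemma coeff_pscomp_eval₂ {g : PowerSeries A} (hg : constantCoeff g = 0)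
    (f : PowerSeries A) {n N : ℕ} (h : n < N) :
    coeff n (pscomp f g) = coeff n (Polynomial.eval₂ C g (trunc N f)) := by
  rw [eval₂_trunc_eq_sum, map_sum, coeff_pscomp hg]
  calc ∑ k ∈ Finset.range (n + 1), coeff k f * coeff n (g ^ k)
      = ∑ k ∈ Finset.range N, coeff k f * coeff n (g ^ k) := by
        apply Finset.sum_subset (Finset.range_subset_range.mpr (by omega))
        intro k _ hk
        simp only [Finset.mem_range, not_lt] at hk
        rw [coeff_pow_eq_zero hg (by omega), mul_zero]
    _ = ∑ k ∈ Finset.range N, coeff n (C (coeff k f) * g ^ k) := by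
        simp [coeff_C_mul]

lemma pscomp_mul {g : PowerSeries A} (hg : constantCoeff g = 0) (a b : PowerSeries A) :
    pscomp (a * b) g = pscomp a g * pscomp b g := by
  ext n
  set N := n + 1 with hN
  have hab : ∀ m < N, (trunc N (a * b)).coeff m = (trunc N a * trunc N b).coeff m := by
    intro m hm
    rw [Polynomial.coeff_mul, coeff_trunc, if_pos hm, PowerSeries.coeff_mul]
    apply Finset.sum_congr rfl
    intro x hx
    have := Finset.HasAntidiagonal.antidiagonal.fst_le hx
    have := Finset.HasAntidiagonal.antidiagonal.snd_le hx
    rw [coeff_trunc, coeff_trunc, if_pos (by omega), if_pos (by omega)]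
  have hD : coeff n (Polynomial.eval₂ C g (trunc N (a * b)))
      = coeff n (Polynomial.eval₂ C g (trunc N a * trunc N b)) := by
    have : trunc N (a * b) = trunc N a * trunc N b
        + (trunc N (a * b) - trunc N a * trunc N b) := by ring
    rw [this, Polynomial.eval₂_add, map_add]
    set D := trunc N (a * b) - trunc N a * trunc N b with hDdef
    have hDcoeff : ∀ m < N, D.coeff m = 0 := by
      intro m hm
      simp [hDdef, Polynomial.coeff_sub, hab m hm]
    have : coeff n (Polynomial.eval₂ C g D) = 0 := by
      rw [Polynomial.eval₂_eq_sum, Polynomial.sum, map_sum]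
      apply Finset.sum_eq_zero
      intro k hk
      have hkN : N ≤ k := by
        by_contra hlt
        exact Polynomial.mem_support_iff.mp hk (hDcoeff k (by omega))
      rw [coeff_C_mul, coeff_pow_eq_zero hg (by omega), mul_zero]
    rw [this, add_zero]
  rw [coeff_pscomp_eval₂ hg (a * b) (by omega : n < N), hD, Polynomial.eval₂_mul,
    PowerSeries.coeff_mul, PowerSeries.coeff_mul]
  apply Finset.sum_congr rfl
  intro x hx
  have h1 := Finset.HasAntidiagonal.antidiagonal.fst_le hx
  have h2 := Finset.HasAntidiagonal.antidiagonal.snd_le hx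
  rw [← coeff_pscomp_eval₂ hg a (by omega : x.1 < N),
    ← coeff_pscomp_eval₂ hg b (by omega : x.2 < N)]

lemma pscomp_add {g : PowerSeries A} (hg : constantCoeff g = 0) (a b : PowerSeries A) :
    pscomp (a + b) g = pscomp a g + pscomp b g := by
  ext n
  rw [map_add, coeff_pscomp hg, coeff_pscomp hg, coeff_pscomp hg, ← Finset.sum_add_distrib]
  apply Finset.sum_congr rfl
  intro k _
  rw [map_add, add_mul]

lemma pscomp_C {g : PowerSeries A} (hg : constantCoeff g = 0) (c : A) :
    pscomp (C c) g = C c := by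
  ext n
  rw [coeff_pscomp hg]
  rw [Finset.sum_eq_single 0]
  · simp [coeff_C]
  · intro k _ hk
    simp [coeff_C, hk]
  · simp

lemma pscomp_X {g : PowerSeries A} (hg : constantCoeff g = 0) :
    pscomp X g = g := by
  ext n
  rw [coeff_pscomp hg]
  rcases Nat.eq_zero_or_pos n with rfl | hn
  · simp [coeff_X, hg]
  · rw [Finset.sum_eq_single 1]
    · simp
    · intro k _ hk
      simp [coeff_X, hk]
    · intro h
      simp only [Finset.mem_range] at h
      omega

lemma constantCoeff_pscomp {g : PowerSeries A} (hg : constantCoeff g = 0)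
    (f : PowerSeries A) : constantCoeff (pscomp f g) = constantCoeff f := by
  rw [← coeff_zero_eq_constantCoeff_apply, ← coeff_zero_eq_constantCoeff_apply,
    coeff_pscomp hg]
  simp

end Aux

theorem iterate_identity {A : Type*} [CommRing A] (y : A) (hy : IsUnit y)
    (u σ : PowerSeries A) (hu : u ^ 2 = X ^ 2 + C y)
    (hu0 : IsUnit (constantCoeff u)) (hσ : σ * u = X) :
    ∀ n : ℕ, 1 ≤ n →
      ((fun f => pscomp σ f)^[n] X) ^ 2
        * (C (∑ i ∈ Finset.range n, y ^ i) * X ^ 2 + C (y ^ n)) = X ^ 2 := by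
  have hσ0 : constantCoeff σ = 0 := by
    have h0 : constantCoeff σ * constantCoeff u = 0 := by
      rw [← map_mul, hσ, constantCoeff_X]
    exact (hu0.mul_left_eq_zero).mp h0
  suffices H : ∀ n : ℕ, constantCoeff ((fun f => pscomp σ f)^[n] X) = 0 ∧
      ((fun f => pscomp σ f)^[n] X) ^ 2
        * (C (∑ i ∈ Finset.range n, y ^ i) * X ^ 2 + C (y ^ n)) = X ^ 2 by
    exact fun n _ => (H n).2
  intro n
  induction n with
  | zero => simp
  | succ n ih =>
    obtain ⟨hf0, hfid⟩ := ih
    set f := (fun f => pscomp σ f)^[n] X with hfdef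
    have hstep : (fun f => pscomp σ f)^[n + 1] X = pscomp σ f := by
      rw [Function.iterate_succ_apply']
    set g := pscomp σ f with hgdef
    set v := pscomp u f with hvdef
    have hg0 : constantCoeff g = 0 := by
      rw [hgdef, constantCoeff_pscomp hf0, hσ0]
    have hgv : g * v = f := by
      rw [hgdef, hvdef, ← pscomp_mul hf0, hσ, pscomp_X hf0]
    have hv2 : v ^ 2 = f ^ 2 + C y := by
      rw [hvdef, sq, ← pscomp_mul hf0, ← sq, hu, pscomp_add hf0, pscomp_C hf0, sq,
        pscomp_mul hf0, pscomp_X hf0, ← sq]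
    have h1 : g ^ 2 * (f ^ 2 + C y) = f ^ 2 := by
      rw [← hv2]
      calc g ^ 2 * v ^ 2 = (g * v) ^ 2 := by ring
        _ = f ^ 2 := by rw [hgv]
    set c : A := ∑ i ∈ Finset.range n, y ^ i with hcdef
    have hsum : (∑ i ∈ Finset.range (n + 1), y ^ i) = 1 + y * c := by
      rw [Finset.sum_range_succ', pow_zero, add_comm, hcdef, Finset.mul_sum]
      congr 1
      exact Finset.sum_congr rfl fun i _ => by ring
    have key : g ^ 2 * (C y * (C c * X ^ 2 + C (y ^ n)) + X ^ 2) = X ^ 2 := by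
      calc g ^ 2 * (C y * (C c * X ^ 2 + C (y ^ n)) + X ^ 2)
          = g ^ 2 * (C y * (C c * X ^ 2 + C (y ^ n))
              + f ^ 2 * (C c * X ^ 2 + C (y ^ n))) := by rw [hfid]
        _ = (g ^ 2 * (f ^ 2 + C y)) * (C c * X ^ 2 + C (y ^ n)) := by ring
        _ = f ^ 2 * (C c * X ^ 2 + C (y ^ n)) := by rw [h1]
        _ = X ^ 2 := hfid
    constructor
    · rw [hstep]; exact hg0
    · rw [hstep, hsum]
      calc g ^ 2 * (C (1 + y * c) * X ^ 2 + C (y ^ (n + 1)))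
          = g ^ 2 * (C y * (C c * X ^ 2 + C (y ^ n)) + X ^ 2) := by
            simp only [map_add, map_mul, map_one, map_pow, pow_succ]
            ring
        _ = X ^ 2 := key
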